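/- arXiv:1911.13024 — 2 statements merged into one kernel-verified Lean document; each statement's English description precedes it below -/
import Mathlib

section
/- There exist argumentation frameworks AF = (AR, Attacks) and AF' = (AR', Attacks') with AF ≼_N AF' such that, for stage semantics, the strong rational monotony condition holds but the strong reference independence condition fails; i.e., setting U = ⋃_{E' stage extension of AF'} (E' \ AR), for every stage extension E of AF, if there is no (a, b) ∈ Attacks' with a ∈ U and b ∈ E, then every stage extension E' of AF' satisfies E ⊆ E'; yet there exist a stage extension E of AF and a stage extension E' of AF' with E' ⊆ AR and E' ≠ E. A witness is AF = ({c, d}, {(c, d), (d, c)}) and AF' = ({c, d, e}, {(c, d), (d, c), (d, e), (e, d), (e, c)}), whose stage extensions are {{c}, {d}} and {{d}, {e}} respectively. -/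
/-- An (abstract) argumentation framework: a finite set of arguments
together with an attack relation on those arguments. -/
structure ArgFramework (α : Type*) where
  args : Set α
  att : Set (α × α)
  args_finite : args.Finite
  att_sub : att ⊆ args ×ˢ args

namespace ArgFramework

variable {α : Type*}

/-- `S` is conflict-free: no member of `S` attacks a member of `S`. -/
def ConflictFree (F : ArgFramework α) (S : Set α) : Prop :=
  S ⊆ F.args ∧ ∀ a ∈ S, ∀ b ∈ S, (a, b) ∉ F.att

/-- `S` is a maximal (w.r.t. set inclusion) conflict-free set. -/
def MaxConflictFree (F : ArgFramework α) (S : Set α) : Prop :=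
  F.ConflictFree S ∧ ∀ T, F.ConflictFree T → S ⊆ T → S = T

/-- Naive extensions are exactly the maximal conflict-free sets. -/
def NaiveExt (F : ArgFramework α) (S : Set α) : Prop :=
  F.MaxConflictFree S

/-- The range of `S`: `S` together with all arguments attacked by `S`. -/
def range (F : ArgFramework α) (S : Set α) : Set α :=
  S ∪ {b | ∃ a ∈ S, (a, b) ∈ F.att}

/-- `S` is a stage extension: a conflict-free set whose range is maximal
(w.r.t. set inclusion) among ranges of conflict-free sets. -/
def StageExt (F : ArgFramework α) (S : Set α) : Prop :=
  F.ConflictFree S ∧ ¬ ∃ T, F.ConflictFree T ∧ F.range S ⊂ F.range T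

/-- `S` is admissible: conflict-free, and every attacker of a member of `S`
is attacked by some member of `S`. -/
def Admissible (F : ArgFramework α) (S : Set α) : Prop :=
  F.ConflictFree S ∧ ∀ a ∈ S, ∀ b, (b, a) ∈ F.att → ∃ c ∈ S, (c, b) ∈ F.att

/-- `S` is a maximal (w.r.t. set inclusion) admissible set. -/
def MaxAdmissible (F : ArgFramework α) (S : Set α) : Prop :=
  F.Admissible S ∧ ∀ T, F.Admissible T → S ⊆ T → S = T

/-- Preferred extensions are the maximal admissible sets. -/
def PreferredExt (F : ArgFramework α) (S : Set α) : Prop :=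
  F.MaxAdmissible S

/-- `a` is acceptable w.r.t. `S`: every attacker of `a` is attacked by `S`. -/
def Acceptable (F : ArgFramework α) (S : Set α) (a : α) : Prop :=
  ∀ b, (b, a) ∈ F.att → ∃ c ∈ S, (c, b) ∈ F.att

/-- `S` is a complete extension: admissible and containing every argument
acceptable w.r.t. `S`. -/
def CompleteExt (F : ArgFramework α) (S : Set α) : Prop :=
  F.Admissible S ∧ ∀ a ∈ F.args, F.Acceptable S a → a ∈ S

/-- `S` is the grounded extension: the minimal complete extension. -/
def GroundedExt (F : ArgFramework α) (S : Set α) : Prop :=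
  F.CompleteExt S ∧ ∀ T, F.CompleteExt T → S ⊆ T

/-- `S` is a stable extension: conflict-free and attacking every outside argument. -/
def StableExt (F : ArgFramework α) (S : Set α) : Prop :=
  F.ConflictFree S ∧ ∀ b ∈ F.args \ S, ∃ a ∈ S, (a, b) ∈ F.att

/-- `F'` is a normal expansion of `F`: arguments and attacks are only added,
and no added attack is between two arguments of `F`. -/
def NormalExpansion (F F' : ArgFramework α) : Prop :=
  F.args ⊆ F'.args ∧ F.att ⊆ F'.att ∧
    ∀ a b, (a, b) ∈ F'.att → (a, b) ∉ F.att → ¬(a ∈ F.args ∧ b ∈ F.args)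

/-- An attack sequence: a nonempty sequence of pairwise distinct arguments
in which each argument attacks its successor. -/
def AttackSeq (F : ArgFramework α) (l : List α) : Prop :=
  l ≠ [] ∧ l.Nodup ∧ (∀ a ∈ l, a ∈ F.args) ∧
    l.Chain' (fun a b => (a, b) ∈ F.att)

/-- `b` is reachable from `a`: there is an attack sequence from `a` to `b`. -/
def Reachable (F : ArgFramework α) (a b : α) : Prop :=
  ∃ l : List α, F.AttackSeq l ∧ l.head? = some a ∧ l.getLast? = some b

/-- An attack cycle: a sequence `a₁, …, aₙ` (n ≥ 2) of arguments in which each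
argument attacks its successor, `a₁ = aₙ`, and `a₁, …, a_{n-1}` are pairwise
distinct. -/
def AttackCycle (F : ArgFramework α) (l : List α) : Prop :=
  2 ≤ l.length ∧ (∀ a ∈ l, a ∈ F.args) ∧
    l.Chain' (fun a b => (a, b) ∈ F.att) ∧
    l.head? = l.getLast? ∧ l.dropLast.Nodup

/-- `F'` is a non-cyclic expansion of `F`: an expansion whose attack cycles
are exactly the attack cycles of `F`. -/
def NonCyclicExpansion (F F' : ArgFramework α) : Prop :=
  F.args ⊆ F'.args ∧ F.att ⊆ F'.att ∧
    ∀ l, F'.AttackCycle l ↔ F.AttackCycle l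

/-- `F'` is a rational man's expansion of `F`: a normal, non-cyclic expansion
such that no added argument reachable from an initial argument `a` allows `a`
to occur in any attack cycle of `F'`. -/
def RationalManExpansion (F F' : ArgFramework α) : Prop :=
  F.NormalExpansion F' ∧ F.NonCyclicExpansion F' ∧
    ∀ a ∈ F.args, ∀ b ∈ F'.args \ F.args, F'.Reachable a b →
      ∀ l, F'.AttackCycle l → a ∉ l

end ArgFramework

open ArgFramework in
private def Fsmall : ArgFramework ℕ where
  args := {0, 1}
  att := {(0,1), (1,0)}
  args_finite := (Set.finite_singleton 1).insert 0
  att_sub := by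
    rintro ⟨a, b⟩ (h | h) <;> simp_all

open ArgFramework in
private def Fbig : ArgFramework ℕ where
  args := {0, 1, 2}
  att := {(0,1), (1,0), (1,2), (2,1), (2,0)}
  args_finite := ((Set.finite_singleton 2).insert 1).insert 0
  att_sub := by
    rintro ⟨a, b⟩ (h | h | h | h | h) <;> simp_all

private lemma range_sub (F : ArgFramework ℕ) {T : Set ℕ} (hT : F.ConflictFree T) :
    F.range T ⊆ F.args := by
  rintro b (hb | ⟨a, ha, hab⟩)
  · exact hT.1 hb
  · exact (F.att_sub hab).2

private lemma stage_of_full (F : ArgFramework ℕ) {S : Set ℕ}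
    (hS : F.ConflictFree S) (hfull : F.args ⊆ F.range S) : F.StageExt S := by
  refine ⟨hS, ?_⟩
  rintro ⟨T, hT, hsub, hne⟩
  exact hne (fun b hb => hfull (range_sub F hT hb))

private lemma stage0 : Fsmall.StageExt {0} := by
  apply stage_of_full
  · constructor
    · intro a ha; subst ha; left; rfl
    · rintro a rfl b rfl h
      rcases h with h | h <;> exact absurd h (by decide)
  · rintro b (rfl | rfl)
    · exact Or.inl rfl
    · exact Or.inr ⟨0, rfl, Or.inl rfl⟩

private lemma stage1' : Fbig.StageExt {1} := by
  apply stage_of_full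
  · constructor
    · intro a ha; subst ha; right; left; rfl
    · rintro a rfl b rfl h
      rcases h with h | h | h | h | h <;> exact absurd h (by decide)
  · rintro b (rfl | rfl | rfl)
    · exact Or.inr ⟨1, rfl, Or.inr (Or.inl rfl)⟩
    · exact Or.inl rfl
    · exact Or.inr ⟨1, rfl, Or.inr (Or.inr (Or.inl rfl))⟩

private lemma stage2' : Fbig.StageExt {2} := by
  apply stage_of_full
  · constructor
    · intro a ha; subst ha; right; right; rfl
    · rintro a rfl b rfl h
      rcases h with h | h | h | h | h <;> exact absurd h (by decide)
  · rintro b (rfl | rfl | rfl)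
    · exact Or.inr ⟨2, rfl, Or.inr (Or.inr (Or.inr (Or.inr rfl)))⟩
    · exact Or.inr ⟨2, rfl, Or.inr (Or.inr (Or.inr (Or.inl rfl)))⟩
    · exact Or.inl rfl

private lemma stage_nonempty {E : Set ℕ} (hE : Fsmall.StageExt E) : E.Nonempty := by
  rcases E.eq_empty_or_nonempty with rfl | h
  · exfalso
    apply hE.2
    refine ⟨{0}, stage0.1, ?_⟩
    constructor
    · intro b hb
      rcases hb with hb | ⟨a, ha, _⟩ <;> simp_all
    · intro hsub
      have : (0 : ℕ) ∈ Fsmall.range (∅ : Set ℕ) := hsub (Or.inl rfl)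
      rcases this with h | ⟨a, ha, _⟩ <;> simp_all
  · exact h

/-- For stage semantics, strong rational monotony does not imply
strong reference independence: there are a framework and a normal expansion
of it for which the strong rational monotony condition holds but the strong
reference independence condition fails. -/
theorem strong_rational_monotony_not_implies_strong_reference_independence :
    ∃ F F' : ArgFramework ℕ,
      F.NormalExpansion F' ∧
      (∀ E, F.StageExt E →
        (¬ ∃ a b, (a, b) ∈ F'.att ∧
          a ∈ (⋃ T ∈ {T | F'.StageExt T}, T \ F.args) ∧ b ∈ E) →
        ∀ E', F'.StageExt E' → E ⊆ E') ∧
      (∃ E E', F.StageExt E ∧ F'.StageExt E' ∧ E' ⊆ F.args ∧ E' ≠ E) := by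
  refine ⟨Fsmall, Fbig, ⟨?_, ?_, ?_⟩, ?_, ?_⟩
  · rintro a (rfl | rfl) <;> simp [Fbig]
  · rintro ⟨a, b⟩ (h | h) <;> simp_all [Fsmall, Fbig]
  · rintro a b hab hnab ⟨ha, hb⟩
    rcases hab with h | h | h | h | h
    · exact hnab (Or.inl h)
    · exact hnab (Or.inr h)
    all_goals (cases h; simp_all [Fsmall])
  · intro E hE hno E' hE'
    exfalso
    apply hno
    obtain ⟨b, hb⟩ := stage_nonempty hE
    have hbargs : b ∈ Fsmall.args := hE.1.1 hb
    have h2U : (2 : ℕ) ∈ (⋃ T ∈ {T | Fbig.StageExt T}, T \ Fsmall.args) := by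
      refine Set.mem_biUnion (show {2} ∈ {T | Fbig.StageExt T} from stage2') ⟨rfl, ?_⟩
      rintro (h | h) <;> simp_all
    rcases hbargs with rfl | rfl
    · exact ⟨2, 0, Or.inr (Or.inr (Or.inr (Or.inr rfl))), h2U, hb⟩
    · exact ⟨2, 1, Or.inr (Or.inr (Or.inr (Or.inl rfl))), h2U, hb⟩
  · refine ⟨{0}, {1}, stage0, stage1', ?_, ?_⟩
    · rintro a rfl; right; rfl
    · intro h
      have : (1 : ℕ) ∈ ({0} : Set ℕ) := h ▸ rfl
      simp_all
end

section
/- Preference-based argumentation violates reference independence under normal expansion: there exist preference-based argumentation frameworks AF_p = (AR, Attacks, Prefs) and AF'_p = (AR', Attacks', Prefs') such that AF'_p is a normal expansion of AF_p, τ(AF'_p) ⊆ AR, and τ(AF'_p) ≠ τ(AF_p). A witness is AF_p = ({a, b, c}, {(a, b)}, {a ⪰ c, b ⪰ c}) and AF'_p = ({a, b, c, d}, {(a, b), (b, d), (d, a)}, {a ⪰ c, b ⪰ c, d ⪰ c}) (each Prefs taken together with reflexive pairs), for which τ(AF_p) = {a, c} and τ(AF'_p) = {c}. -/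
/-- A preference-based argumentation framework: a finite set of arguments,
an attack relation on those arguments, and a partial order (preference
relation) on those arguments. -/
structure PrefArgFramework (α : Type*) where
  args : Set α
  att : Set (α × α)
  prefs : Set (α × α)
  args_finite : args.Finite
  att_sub : att ⊆ args ×ˢ args
  prefs_sub : prefs ⊆ args ×ˢ args
  prefs_refl : ∀ a ∈ args, (a, a) ∈ prefs
  prefs_antisymm : ∀ a b : α, (a, b) ∈ prefs → (b, a) ∈ prefs → a = b
  prefs_trans : ∀ a b c : α, (a, b) ∈ prefs → (b, c) ∈ prefs → (a, c) ∈ prefs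

namespace PrefArgFramework

variable {α : Type*}

/-- The set of acceptable arguments of a preference-based argumentation
framework: arguments `a` such that `a ⪰ b` for every attacker `b` of `a`. -/
def tau (F : PrefArgFramework α) : Set α :=
  {a ∈ F.args | ∀ b ∈ F.args, (b, a) ∈ F.att → (a, b) ∈ F.prefs}

/-- `F'` is a normal expansion of the preference-based framework `F`:
arguments, attacks and preferences are only added, and every added attack and
every added preference pair involves at least one added argument. -/
def NormalExpansion (F F' : PrefArgFramework α) : Prop :=
  F.args ⊆ F'.args ∧ F.att ⊆ F'.att ∧ F.prefs ⊆ F'.prefs ∧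
    (∀ a b : α, (a, b) ∈ F'.att → (a, b) ∉ F.att →
      a ∈ F'.args \ F.args ∨ b ∈ F'.args \ F.args) ∧
    (∀ a b : α, (a, b) ∈ F'.prefs → (a, b) ∉ F.prefs →
      a ∈ F'.args \ F.args ∨ b ∈ F'.args \ F.args)

end PrefArgFramework

def myF : PrefArgFramework ℕ where
  args := {0, 1, 2}
  att := {(0, 1)}
  prefs := {(0, 0), (1, 1), (2, 2), (0, 2), (1, 2)}
  args_finite := Set.toFinite _
  att_sub := by
    intro p hp
    simp only [Set.mem_singleton_iff] at hp
    subst hp; simp [Set.mem_prod]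
  prefs_sub := by
    intro p hp
    simp only [Set.mem_insert_iff, Set.mem_singleton_iff] at hp
    rcases hp with h | h | h | h | h <;> subst h <;> simp [Set.mem_prod]
  prefs_refl := by
    intro a ha
    simp only [Set.mem_insert_iff, Set.mem_singleton_iff] at ha
    rcases ha with h | h | h <;> subst h <;> simp
  prefs_antisymm := by
    intro a b hab hba
    simp only [Set.mem_insert_iff, Set.mem_singleton_iff, Prod.mk.injEq] at hab hba
    omega
  prefs_trans := by
    intro a b c hab hbc
    simp only [Set.mem_insert_iff, Set.mem_singleton_iff, Prod.mk.injEq] at hab hbc ⊢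
    omega

def myF' : PrefArgFramework ℕ where
  args := {0, 1, 2, 3}
  att := {(0, 1), (1, 3), (3, 0)}
  prefs := {(0, 0), (1, 1), (2, 2), (3, 3), (0, 2), (1, 2), (3, 2)}
  args_finite := Set.toFinite _
  att_sub := by
    intro p hp
    simp only [Set.mem_insert_iff, Set.mem_singleton_iff] at hp
    rcases hp with h | h | h <;> subst h <;> simp [Set.mem_prod]
  prefs_sub := by
    intro p hp
    simp only [Set.mem_insert_iff, Set.mem_singleton_iff] at hp
    rcases hp with h | h | h | h | h | h | h <;> subst h <;> simp [Set.mem_prod]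
  prefs_refl := by
    intro a ha
    simp only [Set.mem_insert_iff, Set.mem_singleton_iff] at ha
    rcases ha with h | h | h | h <;> subst h <;> simp
  prefs_antisymm := by
    intro a b hab hba
    simp only [Set.mem_insert_iff, Set.mem_singleton_iff, Prod.mk.injEq] at hab hba
    omega
  prefs_trans := by
    intro a b c hab hbc
    simp only [Set.mem_insert_iff, Set.mem_singleton_iff, Prod.mk.injEq] at hab hbc ⊢
    omega

/-- Preference-based argumentation violates reference
independence under normal expansion: there are a preference-based framework
`F` and a normal expansion `F'` of it such that `τ(F') ⊆ AR` and
`τ(F') ≠ τ(F)`. -/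
theorem preference_based_violates_reference_independence :
    ∃ F F' : PrefArgFramework ℕ,
      F.NormalExpansion F' ∧
      F'.tau ⊆ F.args ∧
      F'.tau ≠ F.tau := by
  refine ⟨myF, myF', ⟨?_, ?_, ?_, ?_, ?_⟩, ?_, ?_⟩
  · intro x hx
    simp only [myF, myF', Set.mem_insert_iff, Set.mem_singleton_iff] at hx ⊢; tauto
  · intro x hx
    simp only [myF, myF', Set.mem_singleton_iff] at hx
    simp [myF', hx]
  · intro x hx
    simp only [myF, myF', Set.mem_insert_iff, Set.mem_singleton_iff] at hx ⊢; tauto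
  · intro a b hab hab'
    simp only [myF, myF', Set.mem_insert_iff, Set.mem_singleton_iff, Prod.mk.injEq,
      Set.mem_diff] at hab hab' ⊢
    omega
  · intro a b hab hab'
    simp only [myF, myF', Set.mem_insert_iff, Set.mem_singleton_iff, Prod.mk.injEq,
      Set.mem_diff] at hab hab' ⊢
    omega
  · intro x hx
    simp only [PrefArgFramework.tau, myF, myF', Set.mem_setOf_eq, Set.mem_insert_iff,
      Set.mem_singleton_iff] at hx ⊢
    obtain ⟨hmem, hx⟩ := hx
    rcases hmem with h | h | h | h
    · tauto
    · tauto
    · tauto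
    · subst h
      have := hx 1 (by tauto) (by simp)
      simp only [Set.mem_insert_iff, Set.mem_singleton_iff, Prod.mk.injEq] at this
      omega
  · intro h
    have h0 : (0 : ℕ) ∈ myF.tau := by
      refine ⟨by simp [myF], ?_⟩
      intro b hb hatt
      simp only [myF, Set.mem_singleton_iff, Prod.mk.injEq] at hatt
      omega
    rw [← h] at h0
    obtain ⟨hmem, h0⟩ := h0
    have := h0 3 (by simp [myF']) (by simp [myF'])
    simp only [myF', Set.mem_insert_iff, Set.mem_singleton_iff, Prod.mk.injEq] at this
    omega
end
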